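/- Let d : ℝ × ℝ → [0,∞) be C² on ℝ² \ Δ with: (H1) d(x,y) > 0 for (x,y) ∉ Δ and d(x,x) = 0; (H2) symmetry; (H3) ∂₁∂₂ d ≥ 0 off the diagonal; (H4D) for every c ∈ ℝ, lim_{λ→−∞} d(c,λ) = lim_{λ→+∞} d(c,λ) and both limits are finite. Then d is a distance on ℝ. -/

import Mathlib

open Filter Set Topology

def IsDistance (d : ℝ → ℝ → ℝ) : Prop :=
  (∀ x y, 0 ≤ d x y) ∧ (∀ x y, d x y = 0 ↔ x = y) ∧
  (∀ x y, d x y = d y x) ∧ (∀ x y z, d x z ≤ d x y + d y z)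

open Filter in
theorem distance_of_H4D (d : ℝ → ℝ → ℝ)
    (hnonneg : ∀ x y, 0 ≤ d x y)
    (hC2 : ContDiffOn ℝ 2 (fun p : ℝ × ℝ => d p.1 p.2) {p : ℝ × ℝ | p.1 ≠ p.2})
    (h1 : ∀ x y : ℝ, x ≠ y → 0 < d x y) (h1' : ∀ x : ℝ, d x x = 0)
    (h2 : ∀ x y, d x y = d y x)
    (h3 : ∀ a b : ℝ, a ≠ b → 0 ≤ deriv (fun s => deriv (fun t => d s t) b) a)
    (h4D : ∀ c : ℝ, ∃ L : ℝ, Tendsto (fun l => d c l) atBot (nhds L) ∧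
      Tendsto (fun l => d c l) atTop (nhds L)) :
    IsDistance d := by
  classical
  choose L hLbot hLtop using h4D
  have hU : IsOpen {p : ℝ × ℝ | p.1 ≠ p.2} :=
    isOpen_ne_fun continuous_fst continuous_snd
  have hdiff : ∀ s t : ℝ, s ≠ t →
      DifferentiableAt ℝ (fun p : ℝ × ℝ => d p.1 p.2) (s, t) := by
    intro s t hst
    exact (hC2.differentiableOn two_ne_zero).differentiableAt (hU.mem_nhds hst)
  have hslice : ∀ s t : ℝ, s ≠ t →
      HasDerivAt (fun u => d s u)
        (fderiv ℝ (fun p : ℝ × ℝ => d p.1 p.2) (s, t) (0, 1)) t := by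
    intro s t hst
    have hcurve : HasDerivAt (fun u : ℝ => ((s, u) : ℝ × ℝ)) ((0 : ℝ), (1 : ℝ)) t :=
      (hasDerivAt_const t s).prodMk (hasDerivAt_id t)
    exact (hdiff s t hst).hasFDerivAt.comp_hasDerivAt t hcurve
  have hcont : ∀ s t : ℝ, s ≠ t → ContinuousAt (fun u => d s u) t :=
    fun s t hst => ((hslice s t hst).differentiableAt).continuousAt
  have hG : ContDiffOn ℝ 1
      (fun p : ℝ × ℝ => fderiv ℝ (fun q : ℝ × ℝ => d q.1 q.2) p ((0 : ℝ), (1 : ℝ)))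
      {p : ℝ × ℝ | p.1 ≠ p.2} :=
    (hC2.fderiv_of_isOpen hU (by norm_num)).clm_apply contDiffOn_const
  -- key monotonicity lemma
  have keymono : ∀ a b : ℝ, a < b → ∀ I : Set ℝ, Convex ℝ I →
      (∀ t ∈ I, ∀ s ∈ Set.Icc a b, s ≠ t) →
      MonotoneOn (fun t => d b t - d a t) I := by
    intro a b hab I hI hsep
    have hD2 : ∀ t ∈ I,
        fderiv ℝ (fun q : ℝ × ℝ => d q.1 q.2) (a, t) ((0:ℝ), (1:ℝ)) ≤
        fderiv ℝ (fun q : ℝ × ℝ => d q.1 q.2) (b, t) ((0:ℝ), (1:ℝ)) := by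
      intro t ht
      have hGt : ContDiffOn ℝ 1
          (fun s : ℝ => fderiv ℝ (fun q : ℝ × ℝ => d q.1 q.2) (s, t) ((0:ℝ), (1:ℝ)))
          {s : ℝ | s ≠ t} :=
        hG.comp ((contDiff_id.prodMk contDiff_const).contDiffOn) (fun s hs => hs)
      have hEq : Set.EqOn (fun s => deriv (fun u => d s u) t)
          (fun s : ℝ => fderiv ℝ (fun q : ℝ × ℝ => d q.1 q.2) (s, t) ((0:ℝ), (1:ℝ)))
          {s : ℝ | s ≠ t} := fun s hs => (hslice s t hs).deriv
      have hsub : Set.Icc a b ⊆ {s : ℝ | s ≠ t} := fun s hs => hsep t ht s hs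
      have hFc : ContinuousOn (fun s => deriv (fun u => d s u) t) {s : ℝ | s ≠ t} :=
        hGt.continuousOn.congr hEq
      have hFd : DifferentiableOn ℝ (fun s => deriv (fun u => d s u) t) {s : ℝ | s ≠ t} :=
        (hGt.differentiableOn one_ne_zero).congr hEq
      have hmono : MonotoneOn (fun s => deriv (fun u => d s u) t) (Set.Icc a b) := by
        apply monotoneOn_of_deriv_nonneg (convex_Icc a b) (hFc.mono hsub)
        · refine hFd.mono ?_
          rw [interior_Icc]
          exact fun s hs => hsub (Set.Ioo_subset_Icc_self hs)
        · intro s hs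
          rw [interior_Icc] at hs
          exact h3 s t (hsep t ht s (Set.Ioo_subset_Icc_self hs))
      have h := hmono (Set.left_mem_Icc.mpr hab.le) (Set.right_mem_Icc.mpr hab.le) hab.le
      rwa [hEq (hsub (Set.left_mem_Icc.mpr hab.le)),
        hEq (hsub (Set.right_mem_Icc.mpr hab.le))] at h
    apply monotoneOn_of_deriv_nonneg hI
    · intro t ht
      exact ((hcont b t (hsep t ht b ⟨hab.le, le_rfl⟩)).sub
        (hcont a t (hsep t ht a ⟨le_rfl, hab.le⟩))).continuousWithinAt
    · intro t ht
      have ht' := interior_subset ht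
      exact (((hslice b t (hsep t ht' b ⟨hab.le, le_rfl⟩)).sub
        (hslice a t (hsep t ht' a ⟨le_rfl, hab.le⟩))).differentiableAt).differentiableWithinAt
    · intro t ht
      have ht' := interior_subset ht
      have hda := hslice a t (hsep t ht' a ⟨le_rfl, hab.le⟩)
      have hdb := hslice b t (hsep t ht' b ⟨hab.le, le_rfl⟩)
      rw [show (fun t => d b t - d a t) = ((fun u => d b u) - fun u => d a u) from rfl,
        (hdb.sub hda).deriv]
      have := hD2 t ht'
      linarith
  -- bounds via limits at ∓∞
  have hbound_lo : ∀ a b : ℝ, a < b → ∀ t, t < a → L b - L a ≤ d b t - d a t := by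
    intro a b hab t ht
    have hmono := keymono a b hab (Set.Iio a) (convex_Iio a)
      (fun u hu s hs => (lt_of_lt_of_le hu hs.1).ne')
    have htend : Tendsto (fun u => d b u - d a u) atBot (nhds (L b - L a)) :=
      (hLbot b).sub (hLbot a)
    refine le_of_tendsto htend ?_
    filter_upwards [eventually_le_atBot t] with u hu
    exact hmono (show u ∈ Set.Iio a from lt_of_le_of_lt hu ht) ht hu
  have hbound_hi : ∀ a b : ℝ, a < b → ∀ t, b < t → d b t - d a t ≤ L b - L a := by
    intro a b hab t ht
    have hmono := keymono a b hab (Set.Ioi b) (convex_Ioi b)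
      (fun u hu s hs => (lt_of_le_of_lt hs.2 hu).ne)
    have htend : Tendsto (fun u => d b u - d a u) atTop (nhds (L b - L a)) :=
      (hLtop b).sub (hLtop a)
    refine ge_of_tendsto htend ?_
    filter_upwards [eventually_ge_atTop t] with u hu
    exact hmono ht (show u ∈ Set.Ioi b from lt_of_lt_of_le ht hu) hu
  -- the three cases of the triangle inequality
  have htriA : ∀ x y z : ℝ, x < y → y < z → d x z ≤ d x y + d y z := by
    intro x y z hxy hyz
    have hmono := keymono y z hyz (Set.Iio y) (convex_Iio y)
      (fun u hu s hs => (lt_of_lt_of_le hu hs.1).ne')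
    have hlim : Tendsto (fun u => d z u) (nhdsWithin y (Set.Iio y)) (nhds (d z y)) :=
      ((hcont z y hyz.ne').tendsto).mono_left nhdsWithin_le_nhds
    have key : d z x - d y x ≤ d z y := by
      refine ge_of_tendsto hlim ?_
      have hmem : Set.Ioo x y ∈ nhdsWithin y (Set.Iio y) :=
        Ioo_mem_nhdsLT_of_mem ⟨hxy, le_rfl⟩
      filter_upwards [hmem] with u hu
      have ha := hmono (show x ∈ Set.Iio y from hxy) (show u ∈ Set.Iio y from hu.2) hu.1.le
      have hb := hnonneg y u
      simp only at ha
      linarith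
    have e1 := h2 z x; have e2 := h2 y x; have e3 := h2 z y
    linarith
  have htriB : ∀ x y z : ℝ, y < x → x < z → d x z ≤ d x y + d y z := by
    intro x y z hyx hxz
    have hb := hbound_hi y x hyx z hxz
    have hlim : Tendsto (fun u => d x u) (nhdsWithin y (Set.Iio y)) (nhds (d x y)) :=
      ((hcont x y hyx.ne').tendsto).mono_left nhdsWithin_le_nhds
    have key : L x - L y ≤ d x y := by
      refine ge_of_tendsto hlim ?_
      filter_upwards [self_mem_nhdsWithin] with u hu
      have ha := hbound_lo y x hyx u hu
      have hc := hnonneg y u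
      linarith
    linarith
  have htriC : ∀ x y z : ℝ, x < z → z < y → d x z ≤ d x y + d y z := by
    intro x y z hxz hzy
    have hb := hbound_lo z y hzy x hxz
    have hlim : Tendsto (fun u => d z u) (nhdsWithin y (Set.Ioi y)) (nhds (d z y)) :=
      ((hcont z y hzy.ne).tendsto).mono_left nhdsWithin_le_nhds
    have key : L z - L y ≤ d z y := by
      refine ge_of_tendsto hlim ?_
      filter_upwards [self_mem_nhdsWithin] with u hu
      have ha := hbound_hi z y hzy u hu
      have hc := hnonneg y u
      linarith
    have e1 := h2 z x; have e2 := h2 y x; have e3 := h2 z y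
    linarith
  have htri' : ∀ x y z : ℝ, x < z → d x z ≤ d x y + d y z := by
    intro x y z hxz
    rcases lt_trichotomy y x with h | h | h
    · exact htriB x y z h hxz
    · subst h
      rw [h1' y, zero_add]
    · rcases lt_trichotomy y z with h' | h' | h'
      · exact htriA x y z h h'
      · subst h'
        rw [h1' y, add_zero]
      · exact htriC x y z hxz h'
  refine ⟨hnonneg, fun x y => ⟨fun h => by_contra fun hne => absurd h (ne_of_gt (h1 x y hne)),
    fun h => h ▸ h1' x⟩, h2, ?_⟩
  intro x y z
  rcases lt_trichotomy x z with h | h | h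
  · exact htri' x y z h
  · subst h
    rw [h1' x]
    exact add_nonneg (hnonneg x y) (hnonneg y x)
  · have ht := htri' z y x h
    have e1 := h2 x z; have e2 := h2 z y; have e3 := h2 y x
    linarith
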